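/- Let M > 0 be fixed, τ = u + iv in the upper half-plane with Mv ≤ |u| ≤ 1/2 and v → 0⁺, and q = e^{2πiτ}. Then |∏_{n≥1}(1-qⁿ)^{-1}| ≪ √v · exp( (1/v)·( π/12 − (1/2π)·(1 − 1/√(1+M²)) ) ). -/

import Mathlib

open Complex Real


lemma aux_basel (K : ℕ) : ∑ k ∈ Finset.range K, 1/((k:ℝ)+1)^2 ≤ π^2/6 := by
  have h0 : ∑ k ∈ Finset.range K, 1/((k:ℝ)+1)^2 = ∑ n ∈ Finset.range (K+1), 1/(n:ℝ)^2 := by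
    rw [Finset.sum_range_succ']
    norm_num
  rw [h0]
  have := hasSum_zeta_two
  calc ∑ n ∈ Finset.range (K+1), 1/(n:ℝ)^2 ≤ ∑' n : ℕ, 1/(n:ℝ)^2 :=
        Summable.sum_le_tsum _ (fun i _ => by positivity) this.summable
    _ = π^2/6 := this.tsum_eq

lemma aux_harmonic (K : ℕ) : Real.log ((K:ℝ)+1) ≤ ∑ k ∈ Finset.range K, 1/((k:ℝ)+1) := by
  have h := log_add_one_le_harmonic K
  have h2 : ((harmonic K : ℚ) : ℝ) = ∑ k ∈ Finset.range K, 1/((k:ℝ)+1) := by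
    rw [harmonic]; push_cast; simp [one_div]
  rw [← h2]
  convert h using 2
  push_cast; ring

lemma aux_inv_exp_sub_one_le {s : ℝ} (hs : 0 < s) :
    1/(Real.exp s - 1) ≤ 1/s - 1/2 + s/6 := by
  have hcube : 1 + s + s^2/2 + s^3/6 ≤ Real.exp s := by
    have := Real.sum_le_exp_of_nonneg hs.le 4
    simp [Finset.sum_range_succ, Nat.factorial] at this
    nlinarith [this]
  have hA : 0 < s * (1 + s/2 + s^2/6) := by positivity
  have h1 : s * (1 + s/2 + s^2/6) ≤ Real.exp s - 1 := by nlinarith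
  have h2 : 1/(Real.exp s - 1) ≤ 1/(s * (1 + s/2 + s^2/6)) :=
    one_div_le_one_div_of_le hA h1
  refine h2.trans ?_
  have he : 1/s - 1/2 + s/6 = (6 - 3*s + s^2)/(6*s) := by field_simp; ring
  rw [he, div_le_div_iff₀ hA (by positivity)]
  nlinarith [sq_nonneg s, sq_nonneg (s^2)]

lemma aux_tail {s : ℝ} (hs : 1 ≤ s) : 1/(Real.exp s - 1) ≤ 2 * Real.exp (-s) := by
  have h2 : (2:ℝ) ≤ Real.exp 1 := by
    have := Real.add_one_le_exp 1; linarith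
  have hes : 2 ≤ Real.exp s := h2.trans (Real.exp_le_exp.2 hs)
  have h0 : 0 < Real.exp s - 1 := by linarith
  have h3 : Real.exp s / 2 ≤ Real.exp s - 1 := by linarith
  calc 1/(Real.exp s - 1) ≤ 1/(Real.exp s / 2) := one_div_le_one_div_of_le (by linarith) h3
    _ = 2 * Real.exp (-s) := by rw [Real.exp_neg]; field_simp

lemma aux_exp_sub_one_pos {s : ℝ} (hs : 0 < s) : 0 < Real.exp s - 1 := by
  have := Real.add_one_lt_exp (x := s) hs.ne'; linarith

-- the basic dominating bound for summability
lemma aux_F_le {t : ℝ} (ht : 0 < t) (k : ℕ) :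
    1/(((k:ℝ)+1) * (Real.exp (((k:ℝ)+1)*t) - 1)) ≤
      (1 - Real.exp (-t))⁻¹ * Real.exp (-t) ^ (k+1) := by
  set s' : ℝ := ((k:ℝ)+1)*t with hs'
  have hk1 : (1:ℝ) ≤ (k:ℝ)+1 := by
    have : (0:ℝ) ≤ (k:ℝ) := Nat.cast_nonneg k
    linarith
  have hts : t ≤ s' := by nlinarith
  have hs0 : 0 < s' := by positivity
  have hx1 : 0 < 1 - Real.exp (-t) := by
    have : Real.exp (-t) < 1 := by rw [Real.exp_lt_one_iff]; linarith
    linarith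
  have hx2 : 0 < 1 - Real.exp (-s') := by
    have : Real.exp (-s') < 1 := by rw [Real.exp_lt_one_iff]; linarith
    linarith
  have hstep : 1 - Real.exp (-t) ≤ 1 - Real.exp (-s') := by
    have : Real.exp (-s') ≤ Real.exp (-t) := Real.exp_le_exp.2 (by linarith)
    linarith
  have hid : Real.exp s' - 1 = Real.exp s' * (1 - Real.exp (-s')) := by
    rw [mul_sub, mul_one, ← Real.exp_add]; simp
  have hpow : Real.exp (-s') = Real.exp (-t) ^ (k+1) := by
    rw [← Real.exp_nat_mul]
    congr 1
    push_cast
    ring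
  have hepos := Real.exp_pos s'
  calc 1/(((k:ℝ)+1)*(Real.exp s' - 1))
      ≤ 1/(Real.exp s' * (1 - Real.exp (-t))) := by
        apply one_div_le_one_div_of_le (by positivity)
        rw [hid]
        have c1 : Real.exp s' * (1 - Real.exp (-t)) ≤ Real.exp s' * (1 - Real.exp (-s')) :=
          mul_le_mul_of_nonneg_left hstep hepos.le
        have c2 : Real.exp s' * (1 - Real.exp (-s')) ≤ ((k:ℝ)+1) * (Real.exp s' * (1 - Real.exp (-s'))) :=
          le_mul_of_one_le_left (by positivity) hk1
        linarith
    _ = (1 - Real.exp (-t))⁻¹ * Real.exp (-t) ^ (k+1) := by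
        rw [← hpow, Real.exp_neg s', one_div, mul_inv, mul_comm]

lemma aux_F_nonneg {t : ℝ} (ht : 0 < t) (k : ℕ) :
    0 ≤ 1/(((k:ℝ)+1) * (Real.exp (((k:ℝ)+1)*t) - 1)) := by
  have : 0 < Real.exp (((k:ℝ)+1)*t) - 1 := aux_exp_sub_one_pos (by positivity)
  positivity

lemma aux_F_summable {t : ℝ} (ht : 0 < t) :
    Summable (fun k : ℕ => 1/(((k:ℝ)+1) * (Real.exp (((k:ℝ)+1)*t) - 1))) := by
  have hx1 : Real.exp (-t) < 1 := by rw [Real.exp_lt_one_iff]; linarith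
  have hx0 : 0 ≤ Real.exp (-t) := (Real.exp_pos _).le
  have hgeo : Summable (fun k : ℕ => (1 - Real.exp (-t))⁻¹ * Real.exp (-t) ^ (k+1)) := by
    apply Summable.mul_left
    exact (summable_geometric_of_lt_one hx0 hx1).comp_injective (add_left_injective 1)
  exact Summable.of_nonneg_of_le (aux_F_nonneg ht) (aux_F_le ht) hgeo

lemma lemR1 {t : ℝ} (ht : 0 < t) (ht2 : t ≤ 1/2) :
    ∑' k : ℕ, 1/(((k:ℝ)+1) * (Real.exp (((k:ℝ)+1)*t) - 1)) ≤
      π^2/(6*t) + Real.log t/2 + 4 := by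
  set F : ℕ → ℝ := fun k => 1/(((k:ℝ)+1) * (Real.exp (((k:ℝ)+1)*t) - 1)) with hF
  have hsum := aux_F_summable ht
  set K : ℕ := ⌊1/t⌋₊ with hK
  have ht1 : (1:ℝ) ≤ 1/t := by rw [le_div_iff₀ ht]; linarith
  have hK1 : (K:ℝ) ≤ 1/t := Nat.floor_le (by positivity)
  have hK2 : 1/t < (K:ℝ)+1 := Nat.lt_floor_add_one _
  have hsplit := Summable.sum_add_tsum_nat_add K hsum
  -- head bound
  have head : ∑ k ∈ Finset.range K, F k ≤ π^2/(6*t) + Real.log t/2 + 1/6 := by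
    have hterm : ∀ k ∈ Finset.range K,
        F k ≤ 1/(((k:ℝ)+1)^2*t) - 1/(2*((k:ℝ)+1)) + t/6 := by
      intro k hk
      have hkK : (k:ℝ)+1 ≤ (K:ℝ) := by
        have := Finset.mem_range.1 hk
        exact_mod_cast Nat.succ_le_of_lt this
      have hs1 : ((k:ℝ)+1)*t ≤ 1 := by
        have : (k:ℝ)+1 ≤ 1/t := hkK.trans hK1
        rw [← le_div_iff₀ ht] at *
        linarith
      have hs0 : 0 < ((k:ℝ)+1)*t := by positivity
      have hkpos : (0:ℝ) < (k:ℝ)+1 := by positivity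
      have h1 := aux_inv_exp_sub_one_le hs0
      have hFk : F k = (1/((k:ℝ)+1)) * (1/(Real.exp (((k:ℝ)+1)*t) - 1)) := by
        rw [hF]; simp [one_div, mul_inv, mul_comm]
      rw [hFk]
      have := mul_le_mul_of_nonneg_left h1 (by positivity : (0:ℝ) ≤ 1/((k:ℝ)+1))
      refine this.trans ?_
      rw [mul_add, mul_sub]
      have e1 : 1/((k:ℝ)+1) * (1/(((k:ℝ)+1)*t)) = 1/(((k:ℝ)+1)^2*t) := by
        field_simp
      have e2 : 1/((k:ℝ)+1) * (1/2) = 1/(2*((k:ℝ)+1)) := by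
        field_simp
        try ring
      have e3 : 1/((k:ℝ)+1) * ((((k:ℝ)+1)*t)/6) = t/6 := by
        field_simp
        try ring
      rw [e1, e2, e3]
    have hsum_le := Finset.sum_le_sum hterm
    refine hsum_le.trans ?_
    rw [Finset.sum_add_distrib, Finset.sum_sub_distrib]
    have b1 : ∑ k ∈ Finset.range K, 1/(((k:ℝ)+1)^2*t) ≤ π^2/(6*t) := by
      have : ∑ k ∈ Finset.range K, 1/(((k:ℝ)+1)^2*t)
          = (∑ k ∈ Finset.range K, 1/((k:ℝ)+1)^2) * (1/t) := by
        rw [Finset.sum_mul]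
        congr 1; ext k; field_simp
      rw [this]
      have := aux_basel K
      calc (∑ k ∈ Finset.range K, 1/((k:ℝ)+1)^2) * (1/t) ≤ (π^2/6) * (1/t) := by
            apply mul_le_mul_of_nonneg_right this (by positivity)
        _ = π^2/(6*t) := by field_simp
    have b2 : -Real.log t/2 ≤ ∑ k ∈ Finset.range K, 1/(2*((k:ℝ)+1)) := by
      have h1 : ∑ k ∈ Finset.range K, 1/(2*((k:ℝ)+1))
          = (∑ k ∈ Finset.range K, 1/((k:ℝ)+1))/2 := by
        rw [Finset.sum_div]
        congr 1; ext k; field_simp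
      rw [h1]
      have h2 := aux_harmonic K
      have h3 : Real.log (1/t) ≤ Real.log ((K:ℝ)+1) :=
        Real.log_le_log (by positivity) (by linarith)
      rw [Real.log_div one_ne_zero ht.ne', Real.log_one, zero_sub] at h3
      linarith
    have b3 : ∑ k ∈ Finset.range K, t/6 ≤ 1/6 := by
      rw [Finset.sum_const, Finset.card_range, nsmul_eq_mul]
      have : (K:ℝ) * t ≤ 1 := by
        rw [← le_div_iff₀ ht] at *; linarith
      linarith
    linarith
  -- tail bound
  have tail : ∑' k : ℕ, F (k + K) ≤ 3 := by
    have hx1 : Real.exp (-t) < 1 := by rw [Real.exp_lt_one_iff]; linarith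
    have hx0 : 0 ≤ Real.exp (-t) := (Real.exp_pos _).le
    have hterm : ∀ k : ℕ, F (k + K) ≤ 2*t * Real.exp (-t) ^ (k+1) := by
      intro k
      have hs1 : (1:ℝ) ≤ ((k:ℝ)+(K:ℝ)+1)*t := by
        have : 1/t < (k:ℝ)+(K:ℝ)+1 := by
          have h0k : (0:ℝ) ≤ (k:ℝ) := Nat.cast_nonneg k
          linarith
        rw [div_lt_iff₀ ht] at this
        linarith
      have hinv : 1/((k:ℝ)+(K:ℝ)+1) ≤ t := by
        rw [div_le_iff₀ (by positivity)]
        nlinarith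
      have hcast : ((k + K : ℕ):ℝ) = (k:ℝ)+(K:ℝ) := by push_cast; ring
      have hFk : F (k+K) = (1/(((k:ℝ)+(K:ℝ))+1)) * (1/(Real.exp ((((k:ℝ)+(K:ℝ))+1)*t) - 1)) := by
        rw [hF]; simp only [hcast]; rw [one_div, one_div, one_div, mul_inv]; try rw [mul_comm]
      rw [hFk]
      have h1 := aux_tail hs1
      have hpos : 0 < Real.exp (((k:ℝ)+(K:ℝ)+1)*t) - 1 := aux_exp_sub_one_pos (by positivity)
      have h2 : 1/(((k:ℝ)+(K:ℝ))+1) * (1/(Real.exp ((((k:ℝ)+(K:ℝ))+1)*t) - 1))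
          ≤ t * (2 * Real.exp (-(((k:ℝ)+(K:ℝ)+1)*t))) := by
        apply mul_le_mul hinv h1 (by positivity) ht.le
      refine h2.trans ?_
      have h3 : Real.exp (-(((k:ℝ)+(K:ℝ)+1)*t)) ≤ Real.exp (-(((k:ℝ)+1)*t)) := by
        apply Real.exp_le_exp.2
        have : ((k:ℝ)+1)*t ≤ ((k:ℝ)+(K:ℝ)+1)*t := by
          apply mul_le_mul_of_nonneg_right _ ht.le
          have : (0:ℝ) ≤ (K:ℝ) := by positivity
          linarith
        linarith
      have h4 : Real.exp (-(((k:ℝ)+1)*t)) = Real.exp (-t)^(k+1) := by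
        rw [← Real.exp_nat_mul]; congr 1; push_cast; ring
      calc t * (2 * Real.exp (-(((k:ℝ)+(K:ℝ)+1)*t)))
          ≤ t * (2 * Real.exp (-(((k:ℝ)+1)*t))) := by nlinarith [Real.exp_pos (-(((k:ℝ)+1)*t))]
        _ = 2*t * Real.exp (-t)^(k+1) := by rw [h4]; ring
    have hgeo : Summable (fun k : ℕ => 2*t * Real.exp (-t) ^ (k+1)) := by
      apply Summable.mul_left
      exact (summable_geometric_of_lt_one hx0 hx1).comp_injective (add_left_injective 1)
    have hFsub : Summable (fun k : ℕ => F (k + K)) := by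
      exact (summable_nat_add_iff K).2 hsum
    have := Summable.tsum_le_tsum hterm hFsub hgeo
    refine this.trans ?_
    have hgeo2 : ∑' k : ℕ, 2*t * Real.exp (-t) ^ (k+1) = 2*t * (Real.exp (-t) * (1 - Real.exp (-t))⁻¹) := by
      rw [tsum_mul_left]
      congr 1
      have : ∀ k : ℕ, Real.exp (-t) ^ (k+1) = Real.exp (-t) * Real.exp (-t) ^ k := by
        intro k; rw [pow_succ]; ring
      simp_rw [this]
      rw [tsum_mul_left, tsum_geometric_of_lt_one hx0 hx1]
    rw [hgeo2]
    have hlow : t/(1+t) ≤ 1 - Real.exp (-t) := by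
      have h1 : Real.exp (-t) ≤ 1/(1+t) := by
        rw [Real.exp_neg, inv_eq_one_div, div_le_div_iff₀ (Real.exp_pos t) (by linarith)]
        have := Real.add_one_le_exp t; nlinarith
      have : 1 - 1/(1+t) = t/(1+t) := by field_simp; ring
      linarith
    have hxpos : 0 < 1 - Real.exp (-t) := by
      have : Real.exp (-t) < 1 := by rw [Real.exp_lt_one_iff]; linarith
      linarith
    have hb : (1 - Real.exp (-t))⁻¹ ≤ (1+t)/t := by
      rw [inv_eq_one_div, div_le_div_iff₀ hxpos ht]
      have := mul_le_mul_of_nonneg_right hlow (by positivity : (0:ℝ) ≤ 1+t)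
      rw [div_mul_eq_mul_div, mul_div_assoc, div_self (by positivity : (1+t) ≠ (0:ℝ))] at this
      nlinarith
    have hexp1 : Real.exp (-t) ≤ 1 := by
      rw [Real.exp_le_one_iff]; linarith
    calc 2*t * (Real.exp (-t) * (1 - Real.exp (-t))⁻¹)
        ≤ 2*t * (1 * ((1+t)/t)) := by
          apply mul_le_mul_of_nonneg_left _ (by positivity)
          apply mul_le_mul hexp1 hb (by positivity) one_pos.le
      _ = 2*(1+t) := by field_simp
      _ ≤ 3 := by linarith
  have : ∑' k, F k = ∑ k ∈ Finset.range K, F k + ∑' k, F (k + K) := hsplit.symm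
  rw [this]
  have : Real.log t/2 = -Real.log t/2 * (-1) := by ring
  linarith

lemma aux_inv_exp_sub_one_ge {t : ℝ} (ht : 0 < t) : 1/t - 1 ≤ 1/(Real.exp t - 1) := by
  have h0 : 0 < Real.exp t - 1 := by
    have := Real.add_one_lt_exp (x := t) ht.ne'; linarith
  rcases le_or_gt 1 t with h | h
  · have : 1/t - 1 ≤ 0 := by
      have : 1/t ≤ 1 := by rw [div_le_one ht]; exact h
      linarith
    exact this.trans (by positivity)
  · have h1 : 1 - t ≤ Real.exp (-t) := by have := Real.add_one_le_exp (-t); linarith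
    have het : 0 < Real.exp t := Real.exp_pos t
    have h2 : (1-t) * Real.exp t ≤ 1 := by
      have := mul_le_mul_of_nonneg_right h1 het.le
      rwa [← Real.exp_add, neg_add_cancel, Real.exp_zero] at this
    have : 1/t - 1 = (1-t)/t := by field_simp
    rw [this, div_le_div_iff₀ ht h0]
    nlinarith



lemma aux_G_norm {q : ℂ} (hx : ‖q‖ < 1) (n k : ℕ) :
    ‖(q^(n+1))^(k+1) / ((k:ℂ)+1)‖ ≤ ‖q‖^(n+1) * ‖q‖^k := by
  have h0 : 0 ≤ ‖q‖ := norm_nonneg q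
  have hden : (1:ℝ) ≤ ‖((k:ℂ)+1)‖ := by
    have h : ((k:ℂ)+1) = ((k+1 : ℕ) : ℂ) := by push_cast; ring
    rw [h, Complex.norm_natCast]
    exact_mod_cast Nat.succ_le_succ (Nat.zero_le k)
  have h1 : ‖(q^(n+1))^(k+1) / ((k:ℂ)+1)‖ ≤ ‖(q^(n+1))^(k+1)‖ := by
    rw [norm_div]
    rw [div_le_iff₀ (lt_of_lt_of_le one_pos hden)]
    exact le_mul_of_one_le_right (norm_nonneg _) hden
  refine h1.trans ?_
  rw [norm_pow, norm_pow, ← pow_mul, ← pow_add]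
  apply pow_le_pow_of_le_one h0 hx.le
  nlinarith [Nat.zero_le n, Nat.zero_le k]

set_option maxHeartbeats 1000000 in
lemma aux_swap {q : ℂ} (hx : ‖q‖ < 1) :
    ∑' n : ℕ, -Complex.log (1 - q^(n+1))
      = ∑' k : ℕ, q^(k+1) * (1 - q^(k+1))⁻¹ / ((k:ℂ)+1) := by
  have h0 : 0 ≤ ‖q‖ := norm_nonneg q
  have hqn : ∀ m : ℕ, ‖q^(m+1)‖ < 1 := by
    intro m
    rw [norm_pow]
    exact pow_lt_one₀ (norm_nonneg q) hx (Nat.succ_ne_zero m)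
  have hgeo1 : Summable (fun n : ℕ => ‖q‖^(n+1)) :=
    (summable_geometric_of_lt_one h0 hx).comp_injective (add_left_injective 1)
  have hmul : Summable (fun p : ℕ × ℕ => ‖q‖^(p.1+1) * ‖q‖^(p.2)) :=
    Summable.mul_of_nonneg hgeo1 (summable_geometric_of_lt_one h0 hx)
      (fun n => by positivity) (fun k => by positivity)
  have hGsum : Summable (fun p : ℕ × ℕ => (q^(p.1+1))^(p.2+1) / ((p.2:ℂ)+1)) :=
    Summable.of_norm (Summable.of_nonneg_of_le (fun p => norm_nonneg _)
      (fun p => aux_G_norm hx p.1 p.2) hmul)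
  have hrow : ∀ n : ℕ, HasSum (fun k : ℕ => (q^(n+1))^(k+1) / ((k:ℂ)+1))
      (-Complex.log (1 - q^(n+1))) := by
    intro n
    have h1 := hasSum_taylorSeries_neg_log (hqn n)
    have h2 : HasSum (fun k : ℕ => (q^(n+1))^(k+1) / ((k+1 : ℕ) : ℂ))
        (-Complex.log (1 - q^(n+1)) - ∑ i ∈ Finset.range 1, (q^(n+1))^i / (i : ℂ)) :=
      (hasSum_nat_add_iff' 1).mpr h1
    simp only [Finset.range_one, Finset.sum_singleton, Nat.cast_zero, div_zero, sub_zero] at h2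
    apply h2.congr_fun
    intro k
    push_cast
    ring
  have hcol : ∀ k : ℕ, Summable (fun n : ℕ => (q^(n+1))^(k+1) / ((k:ℂ)+1)) := by
    intro k
    apply Summable.of_norm
    apply Summable.of_nonneg_of_le (fun n => norm_nonneg _) (fun n => aux_G_norm hx n k)
    exact Summable.mul_right _ hgeo1
  have inner : ∀ k : ℕ, ∑' n : ℕ, (q^(n+1))^(k+1) / ((k:ℂ)+1)
      = q^(k+1) * (1 - q^(k+1))⁻¹ / ((k:ℂ)+1) := by
    intro k
    have hgeom : HasSum (fun n : ℕ => (q^(k+1))^(n+1)) (q^(k+1) * (1 - q^(k+1))⁻¹) := by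
      have h4 := (hasSum_geometric_of_norm_lt_one (hqn k)).mul_left (q^(k+1))
      apply h4.congr_fun
      intro n
      rw [pow_succ']
    have h5 : HasSum (fun n : ℕ => (q^(n+1))^(k+1) / ((k:ℂ)+1))
        (q^(k+1) * (1 - q^(k+1))⁻¹ / ((k:ℂ)+1)) := by
      have h6 := hgeom.div_const ((k:ℂ)+1)
      apply h6.congr_fun
      intro n
      rw [← pow_mul, ← pow_mul, Nat.mul_comm]
    exact h5.tsum_eq
  calc ∑' n : ℕ, -Complex.log (1 - q^(n+1))
      = ∑' (n : ℕ) (k : ℕ), (q^(n+1))^(k+1) / ((k:ℂ)+1) :=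
        tsum_congr fun n => ((hrow n).tsum_eq).symm
    _ = ∑' (k : ℕ) (n : ℕ), (q^(n+1))^(k+1) / ((k:ℂ)+1) :=
        (Summable.tsum_comm' (f := fun (n k : ℕ) => (q^(n+1))^(k+1) / ((k:ℂ)+1)) hGsum
          (fun n => (hrow n).summable) hcol).symm
    _ = ∑' k : ℕ, q^(k+1) * (1 - q^(k+1))⁻¹ / ((k:ℂ)+1) := tsum_congr inner


lemma aux_qpow_norm_lt {q : ℂ} (hx : ‖q‖ < 1) (m : ℕ) : ‖q^(m+1)‖ < 1 := by
  rw [norm_pow]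
  exact pow_lt_one₀ (norm_nonneg q) hx (Nat.succ_ne_zero m)

lemma aux_one_sub_ne {q : ℂ} (hx : ‖q‖ < 1) (m : ℕ) : 1 - q^(m+1) ≠ 0 := by
  intro h
  have h1 : q^(m+1) = 1 := (sub_eq_zero.mp h).symm
  have h2 := aux_qpow_norm_lt hx m
  rw [h1, norm_one] at h2
  exact lt_irrefl 1 h2

lemma aux_log_summable {q : ℂ} (hx : ‖q‖ < 1) :
    Summable fun n : ℕ => Complex.log (1 - q^(n+1)) := by
  have h0 : 0 ≤ ‖q‖ := norm_nonneg q
  apply Summable.of_norm_bounded_eventually_nat (g := fun n => 3/2 * ‖q‖^(n+1))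
  · apply Summable.mul_left
    exact (summable_geometric_of_lt_one h0 hx).comp_injective (add_left_injective 1)
  · have htend : Filter.Tendsto (fun n : ℕ => ‖q‖^(n+1)) Filter.atTop (nhds 0) := by
      have h1 := tendsto_pow_atTop_nhds_zero_of_lt_one h0 hx
      exact h1.comp (Filter.tendsto_add_atTop_nat 1)
    have hev : ∀ᶠ n : ℕ in Filter.atTop, ‖q‖^(n+1) ≤ 1/2 :=
      htend.eventually_le_const (by norm_num)
    filter_upwards [hev] with n hn
    have h2 : (1 : ℂ) - q^(n+1) = 1 + (-(q^(n+1))) := by ring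
    rw [h2]
    have h3 := Complex.norm_log_one_add_half_le_self (z := -(q^(n+1)))
      (by rwa [norm_neg, norm_pow])
    rw [norm_neg, norm_pow] at h3
    exact h3

lemma aux_norm_prod {q : ℂ} (hx : ‖q‖ < 1) :
    ‖(∏' n : ℕ, (1 - q^(n+1)))⁻¹‖
      = Real.exp ((∑' n : ℕ, -Complex.log (1 - q^(n+1))).re) := by
  have hsum := aux_log_summable hx
  have hprod := Complex.cexp_tsum_eq_tprod (f := fun (n : ℕ) => 1 - q^(n+1))
    (fun n => aux_one_sub_ne hx n) hsum
  have h1 : ∏' n : ℕ, (1 - q^(n+1)) = Complex.exp (∑' n, Complex.log (1 - q^(n+1))) :=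
    hprod.symm
  rw [h1, ← Complex.exp_neg, Complex.norm_exp, tsum_neg]


lemma aux_c_norm_le {q : ℂ} {t : ℝ} (ht : 0 < t) (hq : ‖q‖ = Real.exp (-t)) (k : ℕ) :
    ‖q^(k+1) * (1 - q^(k+1))⁻¹ / ((k:ℂ)+1)‖
      ≤ 1/(((k:ℝ)+1) * (Real.exp (((k:ℝ)+1)*t) - 1)) := by
  have hx : ‖q‖ < 1 := by rw [hq, Real.exp_lt_one_iff]; linarith
  have hs0 : 0 < ((k:ℝ)+1)*t := by positivity
  have hxpow : ‖q^(k+1)‖ = Real.exp (-(((k:ℝ)+1)*t)) := by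
    rw [norm_pow, hq, ← Real.exp_nat_mul]
    congr 1
    push_cast
    ring
  have hX1 : Real.exp (-(((k:ℝ)+1)*t)) < 1 := by
    rw [Real.exp_lt_one_iff]; linarith
  have hXpos : 0 < Real.exp (-(((k:ℝ)+1)*t)) := Real.exp_pos _
  have hlow : 1 - Real.exp (-(((k:ℝ)+1)*t)) ≤ ‖1 - q^(k+1)‖ := by
    have h := norm_sub_norm_le (1 : ℂ) (q^(k+1))
    rw [norm_one, hxpow] at h
    exact h
  have hlowpos : 0 < 1 - Real.exp (-(((k:ℝ)+1)*t)) := by linarith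
  have hden : ‖((k:ℂ)+1)‖ = (k:ℝ)+1 := by
    have h : ((k:ℂ)+1) = ((k+1 : ℕ) : ℂ) := by push_cast; ring
    rw [h, Complex.norm_natCast]
    push_cast
    ring
  have hE : Real.exp (((k:ℝ)+1)*t) * (1 - Real.exp (-(((k:ℝ)+1)*t)))
      = Real.exp (((k:ℝ)+1)*t) - 1 := by
    rw [mul_sub, mul_one, ← Real.exp_add]
    simp
  have hprodne : (0:ℝ) < ‖1 - q^(k+1)‖ := lt_of_lt_of_le hlowpos hlow
  calc ‖q^(k+1) * (1 - q^(k+1))⁻¹ / ((k:ℂ)+1)‖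
      = Real.exp (-(((k:ℝ)+1)*t)) * ‖1 - q^(k+1)‖⁻¹ / ((k:ℝ)+1) := by
        rw [norm_div, norm_mul, norm_inv, hxpow, hden]
    _ ≤ Real.exp (-(((k:ℝ)+1)*t)) * (1 - Real.exp (-(((k:ℝ)+1)*t)))⁻¹ / ((k:ℝ)+1) := by
        gcongr
    _ = 1/(((k:ℝ)+1) * (Real.exp (((k:ℝ)+1)*t) - 1)) := by
        rw [← hE, Real.exp_neg]
        have hEpos : (0:ℝ) < Real.exp (((k:ℝ)+1)*t) := Real.exp_pos _
        field_simp

set_option maxHeartbeats 1000000 in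
lemma aux_geom (M u v : ℝ) (hM : 0 < M) (hv : 0 < v) (hvd : v < 1/100)
    (hMu : M*v ≤ |u|) (hu2 : |u| ≤ 1/2) :
    ‖(1 : ℂ) - Complex.exp (2*(π:ℂ)*Complex.I*((u:ℂ) + (v:ℂ)*Complex.I))‖⁻¹
      ≤ (2*π*v*Real.sqrt (1+M^2))⁻¹ + 21 := by
  have hpi := Real.pi_gt_three
  have hpi4 := Real.pi_le_four
  set z : ℂ := 2*(π:ℂ)*Complex.I*((u:ℂ) + (v:ℂ)*Complex.I) with hzdef
  have hzre : z.re = -(2*π*v) := by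
    simp [hzdef, Complex.mul_re, Complex.mul_im, Complex.add_re, Complex.add_im,
      Complex.I_re, Complex.I_im, Complex.ofReal_re, Complex.ofReal_im]
    try ring
  have hzim : z.im = 2*π*u := by
    simp [hzdef, Complex.mul_re, Complex.mul_im, Complex.add_re, Complex.add_im,
      Complex.I_re, Complex.I_im, Complex.ofReal_re, Complex.ofReal_im]
    try ring
  have hznorm : ‖z‖ = 2*π*Real.sqrt (u^2+v^2) := by
    have h1 : z = ((-(2*π*v) : ℝ) : ℂ) + ((2*π*u : ℝ) : ℂ)*Complex.I := by
      apply Complex.ext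
      · simp [hzre]
      · simp [hzim]
    rw [h1, Complex.norm_add_mul_I]
    rw [show (-(2*π*v))^2 + (2*π*u)^2 = (2*π)^2 * (u^2+v^2) by ring]
    rw [Real.sqrt_mul (by positivity), Real.sqrt_sq (by positivity)]
  have hsq : v * Real.sqrt (1+M^2) ≤ Real.sqrt (u^2+v^2) := by
    have h1 : v * Real.sqrt (1+M^2) = Real.sqrt (v^2*(1+M^2)) := by
      rw [Real.sqrt_mul (by positivity), Real.sqrt_sq hv.le]
    rw [h1]
    apply Real.sqrt_le_sqrt
    have h2 : (M*v)^2 ≤ |u|^2 := by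
      apply sq_le_sq' _ hMu
      nlinarith [abs_nonneg u]
    rw [_root_.sq_abs] at h2
    nlinarith
  have hzlow : 2*π*(v*Real.sqrt (1+M^2)) ≤ ‖z‖ := by
    rw [hznorm]
    have : 0 < 2*π := by linarith
    nlinarith
  have hzlowpos : 0 < 2*π*(v*Real.sqrt (1+M^2)) := by positivity
  by_cases hcase : ‖z‖ ≤ 1/2
  · -- small z case
    have hz0 : 0 < ‖z‖ := lt_of_lt_of_le hzlowpos hzlow
    have hq1 : ‖Complex.exp z - 1 - z‖ ≤ ‖z‖^2 := by
      exact Complex.norm_exp_sub_one_sub_id_le (by linarith)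
    have hlow2 : ‖z‖ - ‖z‖^2 ≤ ‖1 - Complex.exp z‖ := by
      have htri : ‖z‖ ≤ ‖Complex.exp z - 1‖ + ‖Complex.exp z - 1 - z‖ := by
        have h := norm_sub_le (Complex.exp z - 1) (Complex.exp z - 1 - z)
        simpa using h
      have hrev : ‖Complex.exp z - 1‖ = ‖1 - Complex.exp z‖ := norm_sub_rev _ _
      linarith
    have hpos2 : 0 < ‖z‖ - ‖z‖^2 := by nlinarith
    have step1 : ‖1 - Complex.exp z‖⁻¹ ≤ (‖z‖ - ‖z‖^2)⁻¹ := by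
      apply inv_anti₀ hpos2 hlow2
    have step2 : (‖z‖ - ‖z‖^2)⁻¹ ≤ ‖z‖⁻¹ + 2 := by
      rw [inv_le_iff_one_le_mul₀ hpos2]
      have h1 : ‖z‖⁻¹ * ‖z‖ = 1 := inv_mul_cancel₀ hz0.ne'
      have h2 : ‖z‖⁻¹ * ‖z‖^2 = ‖z‖ := by rw [sq, ← mul_assoc, h1, one_mul]
      nlinarith [h1, h2]
    have step3 : ‖z‖⁻¹ ≤ (2*π*v*Real.sqrt (1+M^2))⁻¹ := by
      apply inv_anti₀ (by positivity)
      calc 2*π*v*Real.sqrt (1+M^2) = 2*π*(v*Real.sqrt (1+M^2)) := by ring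
        _ ≤ ‖z‖ := hzlow
    linarith
  · -- large z case
    push_neg at hcase
    have hunorm : Real.sqrt (u^2+v^2) ≤ |u| + v := by
      have h1 : u^2 + v^2 ≤ (|u|+v)^2 := by nlinarith [abs_nonneg u, _root_.sq_abs u]
      calc Real.sqrt (u^2+v^2) ≤ Real.sqrt ((|u|+v)^2) := Real.sqrt_le_sqrt h1
        _ = |u| + v := Real.sqrt_sq (by positivity)
    have huge : 1/16 ≤ |u| := by
      have hpi6 := Real.pi_lt_d6
      have h2 : 1/2 < 2*π*(|u|+v) := lt_of_lt_of_le (hcase.trans_eq hznorm)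
        (by nlinarith)
      nlinarith [hpi6, hv, hvd]
    -- now lower bound for ‖1 - exp z‖
    set q : ℂ := Complex.exp z with hqdef
    have hqre : q.re = Real.exp (-(2*π*v)) * Real.cos (2*π*u) := by
      rw [hqdef, Complex.exp_re, hzre, hzim]
    have hqim : q.im = Real.exp (-(2*π*v)) * Real.sin (2*π*u) := by
      rw [hqdef, Complex.exp_im, hzre, hzim]
    have hsc := Real.sin_sq_add_cos_sq (2*π*u)
    have hnormsq : ‖(1:ℂ) - q‖^2 = (1 - q.re)^2 + q.im^2 := by
      rw [Complex.sq_norm, Complex.normSq_apply]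
      simp [Complex.sub_re, Complex.sub_im]
      ring
    have hcosb : 1 - Real.cos (2*π*u) ≥ 1/32 := by
      have habs : Real.cos (2*π*u) = Real.cos (2*π*|u|) := by
        rcases abs_cases u with ⟨h1, _⟩ | ⟨h1, _⟩
        · rw [h1]
        · rw [h1]
          rw [show 2*π*(-u) = -(2*π*u) by ring, Real.cos_neg]
      rw [habs]
      have hθ1 : π/8 ≤ 2*π*|u| := by nlinarith
      have hθ2 : 2*π*|u| ≤ π := by nlinarith
      have hhalf1 : 0 ≤ (2*π*|u|)/2 := by positivity
      have hhalf2 : (2*π*|u|)/2 ≤ π/2 := by linarith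
      have hsin := Real.mul_le_sin hhalf1 hhalf2
      have hsinsq : Real.sin ((2*π*|u|)/2)^2 = 1/2 - Real.cos (2*π*|u|)/2 := by
        have := Real.sin_sq_eq_half_sub ((2*π*|u|)/2)
        rw [show 2*((2*π*|u|)/2) = 2*π*|u| by ring] at this
        exact this
      have hsinlow : 1/8 ≤ Real.sin ((2*π*|u|)/2) := by
        have h3 : 2/π * (2*π*|u|/2) = 2*|u| := by
          field_simp
        rw [h3] at hsin
        linarith [huge]
      nlinarith [hsinsq, hsinlow]
    have hexplow : (1:ℝ)/2 ≤ Real.exp (-(2*π*v)) := by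
      have h5 := Real.add_one_le_exp (-(2*π*v))
      nlinarith [hpi4, hv, hvd]
    have hexpsq : q.re^2 + q.im^2 = Real.exp (-(2*π*v))^2 := by
      rw [hqre, hqim]
      nlinarith [hsc]
    have hlow3 : 1/64 ≤ ‖(1:ℂ) - q‖^2 := by
      rw [hnormsq]
      have hE := Real.exp_pos (-(2*π*v))
      have hEle : Real.exp (-(2*π*v)) ≤ 1 := by
        rw [Real.exp_le_one_iff]; nlinarith
      nlinarith [hexpsq, hcosb, hexplow, sq_nonneg (1 - Real.exp (-(2*π*v)))]
    have hlow4 : 1/8 ≤ ‖(1:ℂ) - q‖ := by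
      nlinarith [norm_nonneg ((1:ℂ) - q)]
    have : ‖(1:ℂ) - q‖⁻¹ ≤ 8 := by
      rw [inv_le_iff_one_le_mul₀ (by linarith : (0:ℝ) < ‖(1:ℂ) - q‖)]
      linarith
    have hfirst : (0:ℝ) ≤ (2*π*v*Real.sqrt (1+M^2))⁻¹ := by positivity
    linarith


set_option maxHeartbeats 1000000 in
/-- Minor arc bound: for fixed `M > 0`, `τ = u + iv` with `Mv ≤ |u| ≤ 1/2` and `v → 0⁺`,
the partition generating function `P(q) = ∏_{n≥1}(1-qⁿ)⁻¹` at `q = e^{2πiτ}` satisfies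
`|P(q)| ≪ √v · exp((1/v)(π/12 - (1/(2π))(1 - 1/√(1+M²))))`. -/
theorem minor_arc_bound (M : ℝ) (hM : 0 < M) :
    ∃ C > 0, ∃ δ > 0, ∀ u v : ℝ, 0 < v → v < δ → M * v ≤ |u| → |u| ≤ 1 / 2 →
      ‖(∏' n : ℕ, (1 - Complex.exp (2 * Real.pi * Complex.I * (u + v * Complex.I)) ^ (n + 1)))⁻¹‖ ≤
        C * Real.sqrt v *
          Real.exp ((1 / v) * (Real.pi / 12 -
            (1 / (2 * Real.pi)) * (1 - 1 / Real.sqrt (1 + M ^ 2)))) := by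
  have hpi := Real.pi_gt_three
  have hpi4 := Real.pi_le_four
  refine ⟨Real.exp 26 * Real.sqrt (2*π), by positivity, 1/100, by norm_num, ?_⟩
  intro u v hv hvd hMu hu2
  have hzeq : (2 * Real.pi * Complex.I * (u + v * Complex.I) : ℂ)
      = 2*(π:ℂ)*Complex.I*((u:ℂ) + (v:ℂ)*Complex.I) := by push_cast; ring
  rw [hzeq]
  set z : ℂ := 2*(π:ℂ)*Complex.I*((u:ℂ) + (v:ℂ)*Complex.I) with hzdef
  set q : ℂ := Complex.exp z with hqdef
  set t : ℝ := 2*π*v with htdef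
  have ht : 0 < t := by positivity
  have ht2 : t ≤ 1/2 := by nlinarith
  have hzre : z.re = -t := by
    rw [htdef, hzdef]
    simp [Complex.mul_re, Complex.mul_im, Complex.add_re, Complex.add_im,
      Complex.I_re, Complex.I_im, Complex.ofReal_re, Complex.ofReal_im]
    try ring
  have hq : ‖q‖ = Real.exp (-t) := by
    rw [hqdef, Complex.norm_exp, hzre]
  have hx : ‖q‖ < 1 := by rw [hq, Real.exp_lt_one_iff]; linarith
  have hsqM : (0:ℝ) < Real.sqrt (1+M^2) := Real.sqrt_pos.2 (by positivity)
  -- rewrite the norm of the inverse product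
  rw [aux_norm_prod hx, aux_swap hx]
  -- summability facts
  have hFsum := aux_F_summable ht
  have hcsum : Summable (fun k : ℕ => q^(k+1) * (1 - q^(k+1))⁻¹ / ((k:ℂ)+1)) := by
    apply Summable.of_norm
    exact Summable.of_nonneg_of_le (fun k => norm_nonneg _)
      (fun k => aux_c_norm_le ht hq k) hFsum
  have hresum : Summable (fun k : ℕ => (q^(k+1) * (1 - q^(k+1))⁻¹ / ((k:ℂ)+1)).re) :=
    (Complex.hasSum_re hcsum.hasSum).summable
  have hre : (∑' k : ℕ, q^(k+1) * (1 - q^(k+1))⁻¹ / ((k:ℂ)+1)).re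
      = ∑' k : ℕ, (q^(k+1) * (1 - q^(k+1))⁻¹ / ((k:ℂ)+1)).re := Complex.re_tsum hcsum
  -- split off the k = 0 term
  have hsplit : ∑' k : ℕ, (q^(k+1) * (1 - q^(k+1))⁻¹ / ((k:ℂ)+1)).re
      = (q^(0+1) * (1 - q^(0+1))⁻¹ / ((0:ℂ)+1)).re
        + ∑' k : ℕ, (q^(k+1+1) * (1 - q^(k+1+1))⁻¹ / (((k+1 : ℕ):ℂ)+1)).re := by
    have := Summable.tsum_eq_zero_add hresum
    simpa using this
  -- bound the k = 0 term
  have h0le : (q^(0+1) * (1 - q^(0+1))⁻¹ / ((0:ℂ)+1)).re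
      ≤ (2*π*v*Real.sqrt (1+M^2))⁻¹ + 21 := by
    have h1 : (q^(0+1) * (1 - q^(0+1))⁻¹ / ((0:ℂ)+1)).re ≤ ‖(1:ℂ) - q‖⁻¹ := by
      calc (q^(0+1) * (1 - q^(0+1))⁻¹ / ((0:ℂ)+1)).re
          ≤ ‖q^(0+1) * (1 - q^(0+1))⁻¹ / ((0:ℂ)+1)‖ := by
            exact Complex.re_le_norm _
        _ = ‖q‖ * ‖(1:ℂ) - q‖⁻¹ := by
            rw [norm_div, norm_mul, norm_inv]
            simp [pow_one]
        _ ≤ 1 * ‖(1:ℂ) - q‖⁻¹ := by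
            apply mul_le_mul_of_nonneg_right hx.le (by positivity)
        _ = ‖(1:ℂ) - q‖⁻¹ := one_mul _
    refine h1.trans ?_
    exact aux_geom M u v hM hv hvd hMu hu2
  -- bound the tail
  have htaille : ∑' k : ℕ, (q^(k+1+1) * (1 - q^(k+1+1))⁻¹ / (((k+1 : ℕ):ℂ)+1)).re
      ≤ ∑' k : ℕ, 1/((((k+1:ℕ):ℝ)+1) * (Real.exp ((((k+1:ℕ):ℝ)+1)*t) - 1)) := by
    apply Summable.tsum_le_tsum
    · intro k
      calc (q^(k+1+1) * (1 - q^(k+1+1))⁻¹ / (((k+1 : ℕ):ℂ)+1)).re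
          ≤ ‖q^(k+1+1) * (1 - q^(k+1+1))⁻¹ / (((k+1 : ℕ):ℂ)+1)‖ := by
            exact Complex.re_le_norm _
        _ ≤ 1/((((k+1:ℕ):ℝ)+1) * (Real.exp ((((k+1:ℕ):ℝ)+1)*t) - 1)) :=
            aux_c_norm_le ht hq (k+1)
    · exact (summable_nat_add_iff 1).2 hresum
    · exact (summable_nat_add_iff 1).2 hFsum
  -- relate shifted F-sum to the full sum
  have hFsplit : ∑' k : ℕ, 1/(((k:ℝ)+1) * (Real.exp (((k:ℝ)+1)*t) - 1))
      = 1/(((0:ℝ)+1) * (Real.exp (((0:ℝ)+1)*t) - 1))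
        + ∑' k : ℕ, 1/((((k+1:ℕ):ℝ)+1) * (Real.exp ((((k+1:ℕ):ℝ)+1)*t) - 1)) := by
    have := Summable.tsum_eq_zero_add hFsum
    simpa using this
  have hF0 : 1/t - 1 ≤ 1/(((0:ℝ)+1) * (Real.exp (((0:ℝ)+1)*t) - 1)) := by
    simpa using aux_inv_exp_sub_one_ge ht
  have hR1 := lemR1 ht ht2
  -- put the real estimates together
  have hfinal : (∑' k : ℕ, q^(k+1) * (1 - q^(k+1))⁻¹ / ((k:ℂ)+1)).re
      ≤ π^2/(6*t) - (1/t)*(1 - (Real.sqrt (1+M^2))⁻¹) + Real.log t/2 + 26 := by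
    rw [hre, hsplit]
    have htv : (2*π*v*Real.sqrt (1+M^2))⁻¹ = (1/t)*(Real.sqrt (1+M^2))⁻¹ := by
      rw [htdef]
      rw [mul_inv, one_div]
    have h2 : ∑' k : ℕ, 1/((((k+1:ℕ):ℝ)+1) * (Real.exp ((((k+1:ℕ):ℝ)+1)*t) - 1))
        ≤ π^2/(6*t) + Real.log t/2 + 4 - (1/t - 1) := by
      have := hFsplit
      linarith [hR1, hF0, hFsplit.symm.le, hFsplit.le]
    have := h0le
    rw [htv] at this
    linarith [htaille]
  -- final exponential computation
  calc Real.exp ((∑' k : ℕ, q^(k+1) * (1 - q^(k+1))⁻¹ / ((k:ℂ)+1)).re)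
      ≤ Real.exp (π^2/(6*t) - (1/t)*(1 - (Real.sqrt (1+M^2))⁻¹) + Real.log t/2 + 26) :=
        Real.exp_le_exp.2 hfinal
    _ = Real.exp 26 * Real.sqrt (2*π) * Real.sqrt v
        * Real.exp ((1/v) * (π/12 - (1/(2*π)) * (1 - 1/Real.sqrt (1+M^2)))) := by
        have hsq2 : Real.sqrt (2*π) * Real.sqrt v = Real.sqrt t := by
          rw [htdef, ← Real.sqrt_mul (by positivity)]
        have hsqrt_exp : Real.sqrt t = Real.exp (Real.log t / 2) := by
          rw [Real.sqrt_eq_rpow, ← Real.exp_log ht, ← Real.exp_mul, Real.exp_log ht]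
          ring_nf
        have hexpeq : π^2/(6*t) - (1/t)*(1 - (Real.sqrt (1+M^2))⁻¹)
            = (1/v) * (π/12 - (1/(2*π)) * (1 - 1/Real.sqrt (1+M^2))) := by
          rw [htdef, inv_eq_one_div]
          field_simp
          ring
        rw [hexpeq]
        rw [show (1/v) * (π/12 - (1/(2*π)) * (1 - 1/Real.sqrt (1+M^2))) + Real.log t/2 + 26
            = 26 + (Real.log t/2 + (1/v) * (π/12 - (1/(2*π)) * (1 - 1/Real.sqrt (1+M^2)))) by ring]
        rw [Real.exp_add, Real.exp_add, ← hsqrt_exp, ← hsq2]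
        ring
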